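/- Let 0 < P₁ < 1 and let F₁(e) = 2(P₁ − e₁)/(2P₁ + e₂ − e₁) on D₀ = [0, P₁] × [0, 1 − P₁]. Let E ⊆ D₀ be a nonempty compact set and let F⋆ = max over e ∈ E of F₁(e). Then for every e⋆ ∈ E: F₁(e⋆) = F⋆ if and only if e⋆ minimizes the cost-sensitive objective e ↦ (1 − F⋆/2)·e₁ + (F⋆/2)·e₂ over E. -/
import Mathlib

/-- The binary `F₁`-measure of an error profile `e = (e₁, e₂)`. -/
noncomputable def binaryF1 (P₁ : ℝ) (e : ℝ × ℝ) : ℝ :=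
  2 * (P₁ - e.1) / (2 * P₁ + e.2 - e.1)

/-- For the binary `F₁`-measure, a point `e⋆` of a nonempty compact set
`E ⊆ [0,P₁] × [0,1−P₁]` achieves the maximum `F⋆` of `F₁` over `E` if and only if it
minimizes the cost-sensitive objective `e ↦ (1 − F⋆/2)·e₁ + (F⋆/2)·e₂` over `E`. -/
theorem binary_F1_optimal_iff_costSensitive (P₁ : ℝ) (hP₁ : 0 < P₁) (hP₁' : P₁ < 1)
    (E : Set (ℝ × ℝ)) (hE : E ⊆ Set.Icc (0 : ℝ) P₁ ×ˢ Set.Icc (0 : ℝ) (1 - P₁))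
    (hEne : E.Nonempty) (hEcomp : IsCompact E)
    (Fstar : ℝ) (hFstar : IsGreatest (binaryF1 P₁ '' E) Fstar) :
    ∀ estar ∈ E,
      (binaryF1 P₁ estar = Fstar ↔
        ∀ e' ∈ E,
          (1 - Fstar / 2) * estar.1 + (Fstar / 2) * estar.2 ≤
            (1 - Fstar / 2) * e'.1 + (Fstar / 2) * e'.2) := by
  have hD : ∀ e ∈ E, 0 < 2 * P₁ + e.2 - e.1 := by
    intro e he
    obtain ⟨⟨h1, h2⟩, h3, h4⟩ := hE he
    linarith
  have key : ∀ e ∈ E, (binaryF1 P₁ e = Fstar ↔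
      (1 - Fstar / 2) * e.1 + (Fstar / 2) * e.2 = P₁ * (1 - Fstar)) := by
    intro e he
    unfold binaryF1
    rw [div_eq_iff (hD e he).ne']
    constructor <;> intro h <;> nlinarith [hD e he]
  have hcost_ge : ∀ e ∈ E, P₁ * (1 - Fstar) ≤ (1 - Fstar / 2) * e.1 + (Fstar / 2) * e.2 := by
    intro e he
    have hle : binaryF1 P₁ e ≤ Fstar := hFstar.2 ⟨e, he, rfl⟩
    unfold binaryF1 at hle
    rw [div_le_iff₀ (hD e he)] at hle
    nlinarith [hD e he]
  obtain ⟨e₀, he₀E, he₀⟩ := hFstar.1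
  intro estar hestar
  constructor
  · intro h e' he'
    have := (key estar hestar).mp h
    have := hcost_ge e' he'
    linarith
  · intro h
    have h₀ := (key e₀ he₀E).mp he₀
    have h1 := h e₀ he₀E
    have h2 := hcost_ge estar hestar
    exact (key estar hestar).mpr (by linarith)
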